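/- Let N, N' ≥ 1, let A be an arbitrary complex N × N' matrix, let k : Fin N → ℂ, k' : Fin N' → ℂ and p, q, r ∈ ℂ be such that p + k_i, q + k_i, r + k_i, p − k'_j, q − k'_j, r − k'_j and k_i + k'_j are all nonzero. For (n,m,h) ∈ ℤ³ define the N' × N matrix M(n,m,h) with entries M_{j,i} = (p+k_i)^n (q+k_i)^m (r+k_i)^h (p−k'_j)^{−n} (q−k'_j)^{−m} (r−k'_j)^{−h} / (k_i + k'_j), and set τ(n,m,h) = det(I + A·M(n,m,h)). Then for all (n,m,h) ∈ ℤ³: (p−q) τ(n,m,h+1) τ(n+1,m+1,h) + (q−r) τ(n+1,m,h) τ(n,m+1,h+1) + (r−p) τ(n,m+1,h) τ(n+1,m,h+1) = 0. -/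

import Mathlib

open Matrix Polynomial

/-- Matrix determinant lemma for a rank-one update, `vecMulVec` form. -/
lemma hm_det1 {n : Type*} [Fintype n] [DecidableEq n] (B : Matrix n n ℂ)
    (hB : IsUnit B.det) (u v : n → ℂ) :
    (B + vecMulVec u v).det = B.det * (1 + v ⬝ᵥ (B⁻¹ *ᵥ u)) := by
  rw [vecMulVec_eq Unit, Matrix.det_add_replicateCol_mul_replicateRow hB]
  congr 1
  rw [Matrix.mul_assoc, ← Matrix.replicateCol_mulVec, det_unique]
  simp [Matrix.one_apply]

/-- Matrix determinant lemma for a rank-two update, `vecMulVec` form. -/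
lemma hm_det2 {n : Type*} [Fintype n] [DecidableEq n] (B : Matrix n n ℂ)
    (hB : IsUnit B.det) (u1 v1 u2 v2 : n → ℂ) :
    (B + vecMulVec u1 v1 + vecMulVec u2 v2).det =
      B.det * ((1 + v1 ⬝ᵥ (B⁻¹ *ᵥ u1)) * (1 + v2 ⬝ᵥ (B⁻¹ *ᵥ u2)) -
        (v1 ⬝ᵥ (B⁻¹ *ᵥ u2)) * (v2 ⬝ᵥ (B⁻¹ *ᵥ u1))) := by
  have hUV : vecMulVec u1 v1 + vecMulVec u2 v2 =
      (Matrix.of fun i t => ![u1, u2] t i : Matrix n (Fin 2) ℂ) *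
        (Matrix.of fun t j => ![v1, v2] t j : Matrix (Fin 2) n ℂ) := by
    ext i j
    simp [Matrix.mul_apply, Fin.sum_univ_two, vecMulVec_apply]
  rw [add_assoc, hUV, Matrix.det_add_mul _ _ hB]
  congr 1
  have key : ∀ a b, ((Matrix.of fun t j => ![v1, v2] t j : Matrix (Fin 2) n ℂ) * B⁻¹ *
      (Matrix.of fun i t => ![u1, u2] t i : Matrix n (Fin 2) ℂ)) a b =
      ![v1, v2] a ⬝ᵥ (B⁻¹ *ᵥ ![u1, u2] b) := by
    intro a b
    rw [Matrix.mul_assoc]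
    simp [Matrix.mul_apply, Matrix.mulVec, dotProduct]
  rw [Matrix.det_fin_two]
  simp only [Matrix.add_apply, Matrix.one_apply_eq, Matrix.one_apply_ne (by decide : (0 : Fin 2) ≠ 1),
    Matrix.one_apply_ne (by decide : (1 : Fin 2) ≠ 0), key]
  simp [Matrix.cons_val_zero, Matrix.cons_val_one]

/-- The core scalar identity behind the Hirota–Miwa equation. -/
lemma hm_core (p q r X1 X2 X3 U1 U2 U3 Y1 Y2 Y3 V1 V2 V3 DB : ℂ)
    (e1 : X1 - X2 = (q - p) * U1) (e2 : X2 - X3 = (r - q) * U2)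
    (e3 : X3 - X1 = (p - r) * U3) (e4 : Y1 - Y2 = (q - p) * V1)
    (e5 : Y2 - Y3 = (r - q) * V2) (e6 : Y3 - Y1 = (p - r) * V3) :
    (p - q) * (DB * (1 + X3)) *
        (DB * ((1 + (q * U1 + V1)) * (1 + X2) - (q * X2 + Y2) * U1)) +
      (q - r) * (DB * (1 + X1)) *
        (DB * ((1 + (r * U2 + V2)) * (1 + X3) - (r * X3 + Y3) * U2)) +
      (r - p) * (DB * (1 + X2)) *
        (DB * ((1 + (p * U3 + V3)) * (1 + X1) - (p * X1 + Y1) * U3)) = 0 := by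
  linear_combination (DB * DB * ((-1)*Y1 + (-1)*X1*Y1 + (-1)*r*V3 + r*V2 + r*U3*Y1 + (-1)*r*X1*V3 + r*X1*V2 + q + (-1)*q*V2 + (2)*q*V1 + (-1)*q*U1*Y2 + q*U1*Y1 + q*X3 + q*X3*V1 + (-1)*q*X1*V2 + q*X1*V1 + (-1)*q^2*U1*V1 + p*V3 + (-2)*p*V1 + (-1)*p*U3*Y1 + p*U1*Y2 + (-1)*p*U1*Y1 + (-1)*p*X3 + (-1)*p*X3*V1 + p*X1 + p*X1*V3 + (-1)*p*X1*V1 + (-1)*p*r*U3 + (2)*p*q*U1*V1 + p^2*U3 + (-1)*p^2*U1*V1)) * e1 +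
    (DB * DB * ((-1)*Y1 + (-1)*X1*Y1 + r + r*V2 + r*X1 + r*X1*V2 + (-1)*q*V2 + q*V1 + (-1)*q*U1*Y2 + q*U1*Y1 + (-1)*q*X1*V2 + q*X1*V1 + (-1)*q^2*U1*V1 + (-1)*p*V1 + p*U1*Y2 + (-1)*p*U1*Y1 + (-1)*p*X1*V1 + (2)*p*q*U1*V1 + (-1)*p^2*U1*V1)) * e2 +
    (DB * DB * ((-1)*Y1 + (-1)*X1*Y1 + q*U1*Y1 + p + (-1)*p*U1*Y1 + p*X1 + (-1)*p*q*U1 + p^2*U1)) * e3 +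
    (DB * DB * ((1) + (2)*X1 + X1^2 + (-1)*r*U2 + (-1)*r*X1*U2 + q*U2 + (-2)*q*U1 + q*X1*U2 + (-2)*q*X1*U1 + q*r*U1*U2 + (-1)*q^2*U1*U2 + q^2*U1^2 + (2)*p*U1 + (2)*p*X1*U1 + (-1)*p*r*U1*U2 + p*q*U1*U2 + (-2)*p*q*U1^2 + p^2*U1^2)) * e4 +
    (DB * DB * ((1) + (2)*X1 + X1^2 + (-1)*r*U2 + (-1)*r*X1*U2 + q*U2 + (-1)*q*U1 + q*X1*U2 + (-1)*q*X1*U1 + p*U1 + p*X1*U1)) * e5 +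
    (DB * DB * ((1) + (2)*X1 + X1^2 + (-1)*q*U1 + (-1)*q*X1*U1 + p*U1 + p*X1*U1)) * e6

set_option maxHeartbeats 1000000 in
/-- Generic form of the Hirota–Miwa bilinear identity at the level of determinants of
rank-one/rank-two perturbations, assuming the base matrix is invertible. -/
lemma hm_generic {N N' : ℕ} (A : Matrix (Fin N) (Fin N') ℂ)
    (M0 : Matrix (Fin N') (Fin N) ℂ) (hB : IsUnit (1 + A * M0).det)
    (p q r : ℂ) (c d : Fin N → ℂ) (ap aq ar apq aqr arp : Fin N' → ℂ)
    (hpq : ∀ j, ap j - aq j = (q - p) * apq j)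
    (hqr : ∀ j, aq j - ar j = (r - q) * aqr j)
    (hrp : ∀ j, ar j - ap j = (p - r) * arp j) :
    (p - q) * (1 + A * (M0 + vecMulVec ar c)).det *
        (1 + A * (M0 + vecMulVec apq (fun i => q * c i + d i) + vecMulVec aq c)).det +
      (q - r) * (1 + A * (M0 + vecMulVec ap c)).det *
        (1 + A * (M0 + vecMulVec aqr (fun i => r * c i + d i) + vecMulVec ar c)).det +
      (r - p) * (1 + A * (M0 + vecMulVec aq c)).det *
        (1 + A * (M0 + vecMulVec arp (fun i => p * c i + d i) + vecMulVec ap c)).det = 0 := by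
  set B : Matrix (Fin N) (Fin N) ℂ := 1 + A * M0 with hBdef
  have hmul : ∀ (x : Fin N' → ℂ) (y : Fin N → ℂ),
      A * vecMulVec x y = vecMulVec (A *ᵥ x) y := by
    intro x y
    ext i i'
    simp [Matrix.mul_apply, vecMulVec_apply, Matrix.mulVec, dotProduct,
      Finset.sum_mul, mul_assoc]
  have h1m : ∀ (x : Fin N' → ℂ) (y : Fin N → ℂ),
      (1 : Matrix (Fin N) (Fin N) ℂ) + A * (M0 + vecMulVec x y) =
        B + vecMulVec (A *ᵥ x) y := by
    intro x y
    rw [Matrix.mul_add, hmul, ← add_assoc, hBdef]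
  have h2m : ∀ (x1 : Fin N' → ℂ) (y1 : Fin N → ℂ) (x2 : Fin N' → ℂ) (y2 : Fin N → ℂ),
      (1 : Matrix (Fin N) (Fin N) ℂ) + A * (M0 + vecMulVec x1 y1 + vecMulVec x2 y2) =
        B + vecMulVec (A *ᵥ x1) y1 + vecMulVec (A *ᵥ x2) y2 := by
    intro x1 y1 x2 y2
    rw [Matrix.mul_add, Matrix.mul_add, hmul, hmul, ← add_assoc, ← add_assoc, hBdef]
  rw [h1m, h1m, h1m, h2m, h2m, h2m, hm_det1 B hB, hm_det1 B hB, hm_det1 B hB,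
    hm_det2 B hB, hm_det2 B hB, hm_det2 B hB]
  have hrow : ∀ (s : ℂ) (z : Fin N → ℂ),
      (fun i => s * c i + d i) ⬝ᵥ z = s * (c ⬝ᵥ z) + d ⬝ᵥ z := by
    intro s z
    simp [dotProduct, Finset.sum_add_distrib, Finset.mul_sum, add_mul, mul_assoc]
  have hlin : ∀ (x y z : Fin N' → ℂ) (t : ℂ), (∀ j, x j - y j = t * z j) →
      ∀ w : Fin N → ℂ, w ⬝ᵥ (B⁻¹ *ᵥ (A *ᵥ x)) - w ⬝ᵥ (B⁻¹ *ᵥ (A *ᵥ y)) =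
        t * (w ⬝ᵥ (B⁻¹ *ᵥ (A *ᵥ z))) := by
    intro x y z t hxyz w
    have hx : x = y + t • z := by
      funext j
      simp only [Pi.add_apply, Pi.smul_apply, smul_eq_mul]
      linear_combination hxyz j
    rw [hx, Matrix.mulVec_add, Matrix.mulVec_smul, Matrix.mulVec_add, Matrix.mulVec_smul,
      dotProduct_add, dotProduct_smul, smul_eq_mul]
    ring
  have e1 := hlin ap aq apq (q - p) hpq c
  have e2 := hlin aq ar aqr (r - q) hqr c
  have e3 := hlin ar ap arp (p - r) hrp c
  have e4 := hlin ap aq apq (q - p) hpq d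
  have e5 := hlin aq ar aqr (r - q) hqr d
  have e6 := hlin ar ap arp (p - r) hrp d
  simp only [hrow]
  exact hm_core p q r _ _ _ _ _ _ _ _ _ _ _ _ B.det e1 e2 e3 e4 e5 e6


/-- relation between the Cauchy update columns -/
lemma hm_rel (S β δ t : ℂ) (hβ : β ≠ 0) (hδ : δ ≠ 0) (ht : δ - β = t) :
    S * β⁻¹ - S * δ⁻¹ = t * (S * (β⁻¹ * δ⁻¹)) := by
  have hb : δ = β + t := by linear_combination ht
  subst hb
  field_simp
  ring

lemma hm_sc1p (P Q R P' Q' R' α β s : ℂ) (hβ : β ≠ 0) (hs : s ≠ 0) (h1 : α - β = s) :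
    P * α * Q * R * (P' * β⁻¹) * Q' * R' / s =
      P * Q * R * P' * Q' * R' / s + P' * Q' * R' * β⁻¹ * (P * Q * R) := by
  have hb : β = α - s := by linear_combination -h1
  subst hb
  field_simp
  ring

lemma hm_sc1q (P Q R P' Q' R' γ δ s : ℂ) (hδ : δ ≠ 0) (hs : s ≠ 0) (h1 : γ - δ = s) :
    P * (Q * γ) * R * P' * (Q' * δ⁻¹) * R' / s =
      P * Q * R * P' * Q' * R' / s + P' * Q' * R' * δ⁻¹ * (P * Q * R) := by
  have hb : δ = γ - s := by linear_combination -h1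
  subst hb
  field_simp
  ring

lemma hm_sc1r (P Q R P' Q' R' ρ ζ s : ℂ) (hζ : ζ ≠ 0) (hs : s ≠ 0) (h1 : ρ - ζ = s) :
    P * Q * (R * ρ) * P' * Q' * (R' * ζ⁻¹) / s =
      P * Q * R * P' * Q' * R' / s + P' * Q' * R' * ζ⁻¹ * (P * Q * R) := by
  have hb : ζ = ρ - s := by linear_combination -h1
  subst hb
  field_simp
  ring

lemma hm_sc2pq (P Q R P' Q' R' α β γ δ s qq kk : ℂ) (hβ : β ≠ 0) (hδ : δ ≠ 0)
    (hs : s ≠ 0) (h1 : α - β = s) (h2 : γ - δ = s) (h3 : γ = qq + kk) :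
    P * α * (Q * γ) * R * (P' * β⁻¹) * (Q' * δ⁻¹) * R' / s =
      P * Q * R * P' * Q' * R' / s +
        P' * Q' * R' * (β⁻¹ * δ⁻¹) * (qq * (P * Q * R) + kk * (P * Q * R)) +
        P' * Q' * R' * δ⁻¹ * (P * Q * R) := by
  subst h3
  have hb : β = α - s := by linear_combination -h1
  subst hb
  have hd : δ = qq + kk - s := by linear_combination -h2
  subst hd
  field_simp
  ring

lemma hm_sc2qr (P Q R P' Q' R' γ δ ρ ζ s qq kk : ℂ) (hδ : δ ≠ 0) (hζ : ζ ≠ 0)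
    (hs : s ≠ 0) (h1 : γ - δ = s) (h2 : ρ - ζ = s) (h3 : ρ = qq + kk) :
    P * (Q * γ) * (R * ρ) * P' * (Q' * δ⁻¹) * (R' * ζ⁻¹) / s =
      P * Q * R * P' * Q' * R' / s +
        P' * Q' * R' * (δ⁻¹ * ζ⁻¹) * (qq * (P * Q * R) + kk * (P * Q * R)) +
        P' * Q' * R' * ζ⁻¹ * (P * Q * R) := by
  subst h3
  have hd : δ = γ - s := by linear_combination -h1
  subst hd
  have hz : ζ = qq + kk - s := by linear_combination -h2
  subst hz
  field_simp
  ring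

lemma hm_sc2rp (P Q R P' Q' R' α β ρ ζ s qq kk : ℂ) (hβ : β ≠ 0) (hζ : ζ ≠ 0)
    (hs : s ≠ 0) (h1 : ρ - ζ = s) (h2 : α - β = s) (h3 : α = qq + kk) :
    P * α * Q * (R * ρ) * (P' * β⁻¹) * Q' * (R' * ζ⁻¹) / s =
      P * Q * R * P' * Q' * R' / s +
        P' * Q' * R' * (ζ⁻¹ * β⁻¹) * (qq * (P * Q * R) + kk * (P * Q * R)) +
        P' * Q' * R' * β⁻¹ * (P * Q * R) := by
  subst h3
  have hz : ζ = ρ - s := by linear_combination -h1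
  subst hz
  have hb : β = qq + kk - s := by linear_combination -h2
  subst hb
  field_simp
  ring

set_option maxHeartbeats 1600000 in
/-- The soliton τ-function `τ = det(1 + A·M)` built from the AKP Cauchy kernel
and discrete plane-wave factors solves the Hirota–Miwa (discrete AKP) equation. -/
theorem hirota_miwa_soliton_solution
    (N N' : ℕ) (hN : 1 ≤ N) (hN' : 1 ≤ N')
    (A : Matrix (Fin N) (Fin N') ℂ) (k : Fin N → ℂ) (k' : Fin N' → ℂ) (p q r : ℂ)
    (h1 : ∀ i, p + k i ≠ 0) (h2 : ∀ i, q + k i ≠ 0) (h3 : ∀ i, r + k i ≠ 0)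
    (h4 : ∀ j, p - k' j ≠ 0) (h5 : ∀ j, q - k' j ≠ 0) (h6 : ∀ j, r - k' j ≠ 0)
    (h7 : ∀ i j, k i + k' j ≠ 0)
    (M : ℤ → ℤ → ℤ → Matrix (Fin N') (Fin N) ℂ)
    (hM : ∀ (n m h : ℤ) (j : Fin N') (i : Fin N), M n m h j i =
      (p + k i) ^ n * (q + k i) ^ m * (r + k i) ^ h *
        (p - k' j) ^ (-n) * (q - k' j) ^ (-m) * (r - k' j) ^ (-h) / (k i + k' j))
    (τ : ℤ → ℤ → ℤ → ℂ)
    (hτ : ∀ n m h : ℤ, τ n m h = Matrix.det (1 + A * M n m h)) :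
    ∀ n m h : ℤ,
      (p - q) * τ n m (h + 1) * τ (n + 1) (m + 1) h +
      (q - r) * τ (n + 1) m h * τ n (m + 1) (h + 1) +
      (r - p) * τ n (m + 1) h * τ (n + 1) m (h + 1) = 0 := by
  intro n m h
  -- helper for negative integer powers
  have hneg : ∀ (x : ℂ), x ≠ 0 → ∀ a : ℤ, x ^ (-(a + 1)) = x ^ (-a) * x⁻¹ := by
    intro x hx a
    rw [neg_add, zpow_add₀ hx, _root_.zpow_neg_one]
  -- plane wave factors and update vectors at the base point (n, m, h)
  set c : Fin N → ℂ := fun i => (p + k i) ^ n * (q + k i) ^ m * (r + k i) ^ h with hc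
  set d : Fin N → ℂ := fun i => k i * ((p + k i) ^ n * (q + k i) ^ m * (r + k i) ^ h) with hd
  set σ : Fin N' → ℂ :=
    fun j => (p - k' j) ^ (-n) * (q - k' j) ^ (-m) * (r - k' j) ^ (-h) with hσ
  set ap : Fin N' → ℂ := fun j => σ j * (p - k' j)⁻¹ with hap
  set aq : Fin N' → ℂ := fun j => σ j * (q - k' j)⁻¹ with haq
  set ar : Fin N' → ℂ := fun j => σ j * (r - k' j)⁻¹ with har
  set apq : Fin N' → ℂ := fun j => σ j * ((p - k' j)⁻¹ * (q - k' j)⁻¹) with hapq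
  set aqr : Fin N' → ℂ := fun j => σ j * ((q - k' j)⁻¹ * (r - k' j)⁻¹) with haqr
  set arp : Fin N' → ℂ := fun j => σ j * ((r - k' j)⁻¹ * (p - k' j)⁻¹) with harp
  -- the six decomposition identities for the shifted Cauchy matrices
  have hLp : M (n + 1) m h = M n m h + Matrix.vecMulVec ap c := by
    ext j i
    simp only [Matrix.add_apply, Matrix.vecMulVec_apply, hM, hc, hap, hσ]
    rw [zpow_add_one₀ (h1 i), hneg _ (h4 j)]
    exact hm_sc1p _ _ _ _ _ _ _ _ _ (h4 j) (h7 i j) (by ring)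
  have hLq : M n (m + 1) h = M n m h + Matrix.vecMulVec aq c := by
    ext j i
    simp only [Matrix.add_apply, Matrix.vecMulVec_apply, hM, hc, haq, hσ]
    rw [zpow_add_one₀ (h2 i), hneg _ (h5 j)]
    exact hm_sc1q _ _ _ _ _ _ _ _ _ (h5 j) (h7 i j) (by ring)
  have hLr : M n m (h + 1) = M n m h + Matrix.vecMulVec ar c := by
    ext j i
    simp only [Matrix.add_apply, Matrix.vecMulVec_apply, hM, hc, har, hσ]
    rw [zpow_add_one₀ (h3 i), hneg _ (h6 j)]
    exact hm_sc1r _ _ _ _ _ _ _ _ _ (h6 j) (h7 i j) (by ring)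
  have hLpq : M (n + 1) (m + 1) h = M n m h +
      Matrix.vecMulVec apq (fun i => q * c i + d i) + Matrix.vecMulVec aq c := by
    ext j i
    simp only [Matrix.add_apply, Matrix.vecMulVec_apply, hM, hc, hd, hapq, haq, hσ]
    rw [zpow_add_one₀ (h1 i), zpow_add_one₀ (h2 i), hneg _ (h4 j), hneg _ (h5 j)]
    exact hm_sc2pq _ _ _ _ _ _ _ _ _ _ _ _ _ (h4 j) (h5 j) (h7 i j)
      (by ring) (by ring) (by ring)
  have hLqr : M n (m + 1) (h + 1) = M n m h +
      Matrix.vecMulVec aqr (fun i => r * c i + d i) + Matrix.vecMulVec ar c := by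
    ext j i
    simp only [Matrix.add_apply, Matrix.vecMulVec_apply, hM, hc, hd, haqr, har, hσ]
    rw [zpow_add_one₀ (h2 i), zpow_add_one₀ (h3 i), hneg _ (h5 j), hneg _ (h6 j)]
    exact hm_sc2qr _ _ _ _ _ _ _ _ _ _ _ _ _ (h5 j) (h6 j) (h7 i j)
      (by ring) (by ring) (by ring)
  have hLrp : M (n + 1) m (h + 1) = M n m h +
      Matrix.vecMulVec arp (fun i => p * c i + d i) + Matrix.vecMulVec ap c := by
    ext j i
    simp only [Matrix.add_apply, Matrix.vecMulVec_apply, hM, hc, hd, harp, hap, hσ]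
    rw [zpow_add_one₀ (h1 i), zpow_add_one₀ (h3 i), hneg _ (h4 j), hneg _ (h6 j)]
    exact hm_sc2rp _ _ _ _ _ _ _ _ _ _ _ _ _ (h4 j) (h6 j) (h7 i j)
      (by ring) (by ring) (by ring)
  -- linear relations among the update column vectors
  have hpq : ∀ j, ap j - aq j = (q - p) * apq j := by
    intro j
    simp only [hap, haq, hapq]
    exact hm_rel _ _ _ _ (h4 j) (h5 j) (by ring)
  have hqr : ∀ j, aq j - ar j = (r - q) * aqr j := by
    intro j
    simp only [haq, har, haqr]
    exact hm_rel _ _ _ _ (h5 j) (h6 j) (by ring)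
  have hrp : ∀ j, ar j - ap j = (p - r) * arp j := by
    intro j
    simp only [har, hap, harp]
    exact hm_rel _ _ _ _ (h6 j) (h4 j) (by ring)
  -- the τ values as evaluations of determinant polynomials in a perturbation parameter t
  set D : ℤ → ℤ → ℤ → Polynomial ℂ := fun a b e =>
    Matrix.det ((1 : Matrix (Fin N) (Fin N) (Polynomial ℂ)) +
      (Polynomial.X : Polynomial ℂ) • (A * M a b e).map Polynomial.C) with hD
  have hEval : ∀ (a b e : ℤ) (t : ℂ),
      Polynomial.eval t (D a b e) = Matrix.det (1 + (t • A) * M a b e) := by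
    intro a b e t
    have hmap : ((1 : Matrix (Fin N) (Fin N) (Polynomial ℂ)) +
        (Polynomial.X : Polynomial ℂ) • (A * M a b e).map Polynomial.C).map
          (Polynomial.evalRingHom t) = 1 + (t • A) * M a b e := by
      ext i j
      simp [Matrix.map_apply, Matrix.one_apply, apply_ite (Polynomial.eval t),
        Matrix.mul_apply, Matrix.smul_apply, smul_eq_mul, Finset.mul_sum, mul_assoc,
        Polynomial.eval_finset_sum]
    rw [hD]
    calc Polynomial.eval t (Matrix.det _) = Polynomial.evalRingHom t (Matrix.det _) := rfl
      _ = _ := by rw [RingHom.map_det, RingHom.mapMatrix_apply, hmap]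
  -- the base determinant polynomial is not identically zero
  have hD0 : D n m h ≠ 0 := by
    intro h0
    have h00 := hEval n m h 0
    rw [h0] at h00
    simp at h00
  -- the Hirota–Miwa combination as a polynomial in t
  set Q : Polynomial ℂ :=
    Polynomial.C (p - q) * D n m (h + 1) * D (n + 1) (m + 1) h +
      Polynomial.C (q - r) * D (n + 1) m h * D n (m + 1) (h + 1) +
      Polynomial.C (r - p) * D n (m + 1) h * D (n + 1) m (h + 1) with hQ
  have hQt : ∀ t : ℂ, ¬ (D n m h).IsRoot t → Q.IsRoot t := by
    intro t ht
    have htne : Matrix.det (1 + (t • A) * M n m h) ≠ 0 := by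
      rw [← hEval]
      exact ht
    have hBu : IsUnit (1 + (t • A) * M n m h).det := isUnit_iff_ne_zero.2 htne
    unfold Polynomial.IsRoot
    rw [hQ]
    simp only [Polynomial.eval_add, Polynomial.eval_mul, Polynomial.eval_C, hEval]
    rw [hLr, hLpq, hLp, hLqr, hLq, hLrp]
    exact hm_generic (t • A) (M n m h) hBu p q r c d ap aq ar apq aqr arp hpq hqr hrp
  -- hence the polynomial Q vanishes identically
  have hQ0 : Q = 0 := by
    apply Polynomial.eq_zero_of_infinite_isRoot
    apply Set.Infinite.mono (s := {t : ℂ | (D n m h).IsRoot t}ᶜ)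
    · intro t ht
      exact hQt t ht
    · exact Set.Finite.infinite_compl (Polynomial.finite_setOf_isRoot hD0)
  -- evaluate at t = 1
  have hfin : Polynomial.eval 1 Q = 0 := by rw [hQ0]; simp
  rw [hQ] at hfin
  simp only [Polynomial.eval_add, Polynomial.eval_mul, Polynomial.eval_C, hEval,
    one_smul] at hfin
  rw [hτ n m (h + 1), hτ (n + 1) (m + 1) h, hτ (n + 1) m h, hτ n (m + 1) (h + 1),
    hτ n (m + 1) h, hτ (n + 1) m (h + 1)]
  exact hfin
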